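/- Suppose: (i) μ : S → ℝ is continuous, c ∈ ℝ, the level set {s ∈ S : μ(s) = c} equals ∂A_c, and ∂A_c is nonempty; (ii) σ : S → ℝ is continuous and strictly positive; (iii) μ̂_n, n ∈ ℕ, are random fields on S and τ_n > 0 are positive reals with τ_n → 0 such that the random fields s ↦ (μ̂_n(s) − μ(s))/(τ_n σ(s)) converge in distribution in C(S,ℝ) to a centered Gaussian field G with unit variance; (iv) the cumulative distribution function of sup_{s ∈ ∂A_c} |G(s)| is continuous. Then for every a > 0, writing Â_{c,n}^± for the CoPE sets built from μ̂_n, τ_n, σ, c, a, one has lim_{n→∞} P[∂A_c ⊆ cl(Â_{c,n}^− \ Â_{c,n}^+)] = P[sup_{s ∈ ∂A_c} |G(s)| ≤ a], where cl denotes the topological closure in S. -/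
import Mathlib


open MeasureTheory Filter Topology ProbabilityTheory BoundedContinuousFunction

noncomputable section

/-- Borel measurable structure on the space of continuous functions. -/
instance contMapMeasurableSpace (α β : Type*) [TopologicalSpace α] [TopologicalSpace β] :
    MeasurableSpace C(α, β) := borel _

/-- The excursion set `A_c = {s : μ s ≥ c}`. -/
def excursionSet {α : Type*} (μ : α → ℝ) (c : ℝ) : Set α := {s | c ≤ μ s}

/-- The upper CoPE set `Â_c(+a)`. -/
def copePlus {α : Type*} (μhat σ : α → ℝ) (c τ a : ℝ) : Set α :=
  {s | a ≤ (μhat s - c) / (τ * σ s)}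

/-- The lower CoPE set `Â_c(-a)`. -/
def copeMinus {α : Type*} (μhat σ : α → ℝ) (c τ a : ℝ) : Set α :=
  {s | -a ≤ (μhat s - c) / (τ * σ s)}

/-- The standardized estimation error `s ↦ (μ̂(s) - μ(s)) / (τ σ(s))` as a continuous map. -/
def stdField {α : Type*} [TopologicalSpace α] (f μ σ : C(α, ℝ)) (τ : ℝ)
    (hσ : ∀ s, σ s ≠ 0) (hτ : τ ≠ 0) : C(α, ℝ) :=
  ⟨fun s => (f s - μ s) / (τ * σ s),
    ((map_continuous f).sub (map_continuous μ)).div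
      (continuous_const.mul (map_continuous σ)) fun s => mul_ne_zero hτ (hσ s)⟩

/-- `sup_{s ∈ B} |f s|`. -/
def supAbsOn {α : Type*} (f : α → ℝ) (B : Set α) : ℝ := sSup ((fun s => |f s|) '' B)

/-- A random field `G` (a random element of `C(α, ℝ)`) is a centered Gaussian field if every
finite linear combination of its values has a (possibly degenerate) centered Gaussian law. -/
def IsCenteredGaussianField {α Ω : Type*} [TopologicalSpace α] [MeasurableSpace Ω]
    (P : Measure Ω) (G : Ω → C(α, ℝ)) : Prop :=
  ∀ (K : ℕ) (pts : Fin K → α) (coef : Fin K → ℝ),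
    ∃ v : NNReal, Measure.map (fun ω => ∑ i, coef i * G ω (pts i)) P = gaussianReal 0 v

/-- **Corollary (confidence sets for the contour).** -/
theorem cope_contour_coverage
    {N : ℕ} (hN : 1 ≤ N) (S : Set (EuclideanSpace ℝ (Fin N))) (hS : IsCompact S)
    (μ σ : C(S, ℝ)) (c : ℝ)
    (hlevel : {s : S | μ s = c} = frontier (excursionSet (⇑μ) c))
    (hne : (frontier (excursionSet (⇑μ) c)).Nonempty)
    (hσ : ∀ s, 0 < σ s)
    {Ω : Type*} [MeasurableSpace Ω] (P : Measure Ω) [IsProbabilityMeasure P]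
    {Ω' : Type*} [MeasurableSpace Ω'] (P' : Measure Ω') [IsProbabilityMeasure P']
    (μhat : ℕ → Ω → C(S, ℝ)) (hmeas : ∀ n, Measurable (μhat n))
    (τ : ℕ → ℝ) (hτ : ∀ n, 0 < τ n) (hτ0 : Tendsto τ atTop (𝓝 0))
    (G : Ω' → C(S, ℝ)) (hGmeas : Measurable G)
    (hG : IsCenteredGaussianField P' G)
    (hGvar : ∀ s : S, ∫ ω, (G ω s) ^ 2 ∂P' = 1)
    (hconv : ∀ φ : C(S, ℝ) →ᵇ ℝ,
      Tendsto
        (fun n => ∫ ω, φ (stdField (μhat n ω) μ σ (τ n) (fun s => (hσ s).ne') (hτ n).ne') ∂P)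
        atTop (𝓝 (∫ ω, φ (G ω) ∂P')))
    (hcdf : Continuous fun a : ℝ =>
      (P' {ω | supAbsOn (⇑(G ω)) (frontier (excursionSet (⇑μ) c)) ≤ a}).toReal) :
    ∀ a : ℝ, 0 < a →
      Tendsto
        (fun n =>
          (P {ω | frontier (excursionSet (⇑μ) c) ⊆
              closure (copeMinus (⇑(μhat n ω)) (⇑σ) c (τ n) a \
                copePlus (⇑(μhat n ω)) (⇑σ) c (τ n) a)}).toReal)
        atTop
        (𝓝 ((P' {ω | supAbsOn (⇑(G ω)) (frontier (excursionSet (⇑μ) c)) ≤ a}).toReal)) := by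
  intro a ha
  haveI : CompactSpace ↥S := isCompact_iff_compactSpace.mp hS
  haveI : BorelSpace C(↥S, ℝ) := ⟨rfl⟩
  set B : Set ↥S := frontier (excursionSet (⇑μ) c) with hBdef
  have hBclosed : IsClosed B := isClosed_frontier
  have hBcompact : IsCompact B := hBclosed.isCompact
  obtain ⟨s₀, hs₀⟩ := hne
  have hbdd : ∀ f : C(↥S, ℝ), BddAbove ((fun s => |f s|) '' B) := fun f =>
    (hBcompact.image ((map_continuous f).abs)).bddAbove
  have hmemim : ∀ (f : C(↥S, ℝ)) {s : ↥S}, s ∈ B → |f s| ≤ supAbsOn (⇑f) B := by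
    intro f s hs
    exact le_csSup (hbdd f) ⟨s, hs, rfl⟩
  have hsup_le : ∀ (f : C(↥S, ℝ)) (b : ℝ), (∀ s ∈ B, |f s| ≤ b) → supAbsOn (⇑f) B ≤ b := by
    intro f b hb
    exact csSup_le ⟨|f s₀|, ⟨s₀, hs₀, rfl⟩⟩ (by rintro x ⟨s, hs, rfl⟩; exact hb s hs)
  -- continuity of the sup functional
  have hT_half : ∀ f g : C(↥S, ℝ), supAbsOn (⇑f) B ≤ supAbsOn (⇑g) B + dist f g := by
    intro f g
    apply hsup_le
    intro s hs
    have h1 : |f s| ≤ |g s| + |f s - g s| := by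
      calc |f s| = |g s + (f s - g s)| := by ring_nf
        _ ≤ |g s| + |f s - g s| := abs_add_le _ _
    have h2 : |f s - g s| ≤ dist f g := by
      rw [← Real.dist_eq]; exact ContinuousMap.dist_apply_le_dist s
    have h3 := hmemim g hs
    linarith
  have hT_cont : Continuous (fun f : C(↥S, ℝ) => supAbsOn (⇑f) B) := by
    apply (LipschitzWith.of_dist_le_mul (K := 1) ?_).continuous
    intro f g
    rw [NNReal.coe_one, one_mul, Real.dist_eq, abs_sub_le_iff]
    have h1 := hT_half f g
    have h2 := hT_half g f
    have h3 : dist g f = dist f g := dist_comm g f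
    constructor <;> linarith
  -- the standardized fields and their sups
  set g : ℕ → Ω → C(↥S, ℝ) :=
    fun n ω => stdField (μhat n ω) μ σ (τ n) (fun s => (hσ s).ne') (hτ n).ne' with hgdef
  set X : ℕ → Ω → ℝ := fun n ω => supAbsOn (⇑(g n ω)) B with hXdef
  set Y : Ω' → ℝ := fun ω => supAbsOn (⇑(G ω)) B with hYdef
  set F : ℝ → ℝ := fun b => (P' {ω | supAbsOn (⇑(G ω)) B ≤ b}).toReal with hFdef
  -- continuity of f ↦ stdField f μ σ τ
  have hΦcont : ∀ n, Continuous
      (fun f : C(↥S, ℝ) => stdField f μ σ (τ n) (fun s => (hσ s).ne') (hτ n).ne') := by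
    intro n
    have hhc : Continuous (fun s : ↥S => (τ n * σ s)⁻¹) :=
      (continuous_const.mul (map_continuous σ)).inv₀
        fun s => mul_ne_zero (hτ n).ne' (hσ s).ne'
    have hrepr : (fun f : C(↥S, ℝ) => stdField f μ σ (τ n) (fun s => (hσ s).ne') (hτ n).ne')
        = fun f => (f - μ) * ⟨fun s => (τ n * σ s)⁻¹, hhc⟩ := by
      funext f; ext s
      simp [stdField, div_eq_mul_inv]
    rw [hrepr]
    exact (continuous_id.sub continuous_const).mul continuous_const
  have hXmeas : ∀ n, Measurable (X n) := fun n =>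
    ((hT_cont.comp (hΦcont n)).measurable).comp (hmeas n)
  have hYmeas : Measurable Y := hT_cont.measurable.comp hGmeas
  -- pushforward probability measures
  set ν : ℕ → ProbabilityMeasure ℝ :=
    fun n => ⟨Measure.map (X n) P, Measure.isProbabilityMeasure_map (hXmeas n).aemeasurable⟩ with hνdef
  set νL : ProbabilityMeasure ℝ :=
    ⟨Measure.map Y P', Measure.isProbabilityMeasure_map hYmeas.aemeasurable⟩ with hνLdef
  have hν_coe : ∀ n, (ν n : Measure ℝ) = Measure.map (X n) P := fun n => rfl
  have hνL_coe : (νL : Measure ℝ) = Measure.map Y P' := rfl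
  -- weak convergence
  have hweak : Tendsto ν atTop (𝓝 νL) := by
    rw [ProbabilityMeasure.tendsto_iff_forall_integral_tendsto]
    intro ψ
    have h1 : ∀ n, ∫ x, ψ x ∂(ν n : Measure ℝ) = ∫ ω, ψ (X n ω) ∂P := by
      intro n
      rw [hν_coe n]
      exact integral_map (hXmeas n).aemeasurable ψ.continuous.aestronglyMeasurable
    have h2 : ∫ x, ψ x ∂(νL : Measure ℝ) = ∫ ω, ψ (Y ω) ∂P' := by
      rw [hνL_coe]
      exact integral_map hYmeas.aemeasurable ψ.continuous.aestronglyMeasurable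
    simp only [h1, h2]
    exact hconv (ψ.compContinuous ⟨fun f => supAbsOn (⇑f) B, hT_cont⟩)
  -- identification of the limit cdf
  have hIic : ∀ b : ℝ, ((νL : Measure ℝ) (Set.Iic b)).toReal = F b := by
    intro b
    rw [hνL_coe, Measure.map_apply hYmeas measurableSet_Iic]
    rfl
  -- no atom at a
  have hIoU : Set.Iio a = ⋃ k : ℕ, Set.Iic (a - 1/((k : ℝ)+1)) := by
    ext x
    simp only [Set.mem_Iio, Set.mem_iUnion, Set.mem_Iic]
    constructor
    · intro hx
      obtain ⟨k, hk⟩ := exists_nat_one_div_lt (show (0:ℝ) < a - x by linarith)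
      exact ⟨k, by linarith⟩
    · rintro ⟨k, hk⟩
      have hpos : (0:ℝ) < 1/((k : ℝ)+1) := by positivity
      linarith
  have hmono : Monotone fun k : ℕ => Set.Iic (a - 1/((k : ℝ)+1)) := by
    intro i j hij
    apply Set.Iic_subset_Iic.mpr
    have h1 : (1:ℝ)/((j : ℝ)+1) ≤ 1/((i : ℝ)+1) := by
      apply one_div_le_one_div_of_le (by positivity)
      have : (i : ℝ) ≤ (j : ℝ) := by exact_mod_cast hij
      linarith
    linarith
  have hmeasIio : Tendsto (fun k : ℕ => (νL : Measure ℝ) (Set.Iic (a - 1/((k : ℝ)+1)))) atTop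
      (𝓝 ((νL : Measure ℝ) (Set.Iio a))) := by
    have := tendsto_measure_iUnion_atTop (μ := (νL : Measure ℝ)) hmono
    rwa [← hIoU] at this
  have hIio_toReal : Tendsto (fun k : ℕ => ((νL : Measure ℝ) (Set.Iic (a - 1/((k : ℝ)+1)))).toReal)
      atTop (𝓝 (((νL : Measure ℝ) (Set.Iio a)).toReal)) :=
    (ENNReal.tendsto_toReal (measure_ne_top _ _)).comp hmeasIio
  have hFlim : Tendsto (fun k : ℕ => F (a - 1/((k : ℝ)+1))) atTop (𝓝 (F a)) := by
    apply (hcdf.tendsto a).comp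
    have h0 : Tendsto (fun k : ℕ => 1/((k : ℝ)+1)) atTop (𝓝 0) :=
      tendsto_one_div_add_atTop_nhds_zero_nat
    have := tendsto_const_nhds (x := a) (f := atTop (α := ℕ)) |>.sub h0
    simpa using this
  have hIio_eq : ((νL : Measure ℝ) (Set.Iio a)).toReal = F a := by
    apply tendsto_nhds_unique hIio_toReal
    simpa only [hIic] using hFlim
  have hsplit : (νL : Measure ℝ) (Set.Iic a)
      = (νL : Measure ℝ) (Set.Iio a) + (νL : Measure ℝ) {a} := by
    rw [← measure_union (by simp) (measurableSet_singleton a), Set.Iio_union_right]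
  have hatom : (νL : Measure ℝ) {a} = 0 := by
    have hfin1 := measure_ne_top (νL : Measure ℝ) (Set.Iio a)
    have hfin2 := measure_ne_top (νL : Measure ℝ) {a}
    have heq : ((νL : Measure ℝ) (Set.Iic a)).toReal
        = ((νL : Measure ℝ) (Set.Iio a)).toReal + ((νL : Measure ℝ) {a}).toReal := by
      rw [hsplit, ENNReal.toReal_add hfin1 hfin2]
    rw [hIic a, hIio_eq] at heq
    have h0 : ((νL : Measure ℝ) {a}).toReal = 0 := by linarith
    simpa [ENNReal.toReal_eq_zero_iff, hfin2] using h0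
  -- portmanteau
  have hnullIic : (νL : Measure ℝ) (frontier (Set.Iic a)) = 0 := by
    rw [frontier_Iic]; exact hatom
  have hnullIio : (νL : Measure ℝ) (frontier (Set.Iio a)) = 0 := by
    rw [frontier_Iio]; exact hatom
  have hIicT : Tendsto (fun n => (((ν n : Measure ℝ)) (Set.Iic a)).toReal) atTop (𝓝 (F a)) := by
    have h := MeasureTheory.ProbabilityMeasure.tendsto_measure_of_null_frontier_of_tendsto'
      hweak hnullIic
    have := (ENNReal.tendsto_toReal (measure_ne_top _ _)).comp h
    rwa [hIic a] at this
  have hIioT : Tendsto (fun n => (((ν n : Measure ℝ)) (Set.Iio a)).toReal) atTop (𝓝 (F a)) := by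
    have h := MeasureTheory.ProbabilityMeasure.tendsto_measure_of_null_frontier_of_tendsto'
      hweak hnullIio
    have := (ENNReal.tendsto_toReal (measure_ne_top _ _)).comp h
    rwa [hIio_eq] at this
  -- the sandwich
  have hμc : ∀ {s : ↥S}, s ∈ B → μ s = c := by
    intro s hs
    have : s ∈ {s : ↥S | μ s = c} := by rw [hlevel]; exact hs
    exact this
  have hlow : ∀ n, (X n) ⁻¹' (Set.Iio a) ⊆ {ω | B ⊆
      closure (copeMinus (⇑(μhat n ω)) (⇑σ) c (τ n) a
        \ copePlus (⇑(μhat n ω)) (⇑σ) c (τ n) a)} := by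
    intro n ω hω s hs
    apply subset_closure
    have habs : |g n ω s| < a := lt_of_le_of_lt (hmemim _ hs) hω
    have hval : (μhat n ω s - c) / (τ n * σ s) = g n ω s := by
      simp [hgdef, stdField, hμc hs]
    have h1 := (abs_lt.mp habs).1
    have h2 := (abs_lt.mp habs).2
    refine ⟨?_, ?_⟩
    · show -a ≤ (μhat n ω s - c) / (τ n * σ s)
      rw [hval]; linarith
    · show ¬ (a ≤ (μhat n ω s - c) / (τ n * σ s))
      rw [hval]; linarith
  have hup : ∀ n, {ω | B ⊆
      closure (copeMinus (⇑(μhat n ω)) (⇑σ) c (τ n) a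
        \ copePlus (⇑(μhat n ω)) (⇑σ) c (τ n) a)} ⊆ (X n) ⁻¹' (Set.Iic a) := by
    intro n ω hω
    show X n ω ≤ a
    apply hsup_le
    intro s hs
    have fcont : Continuous (fun t : ↥S => (μhat n ω t - c) / (τ n * σ t)) :=
      ((map_continuous (μhat n ω)).sub continuous_const).div
        (continuous_const.mul (map_continuous σ))
        fun t => mul_ne_zero (hτ n).ne' (hσ t).ne'
    have hsub : closure (copeMinus (⇑(μhat n ω)) (⇑σ) c (τ n) a
        \ copePlus (⇑(μhat n ω)) (⇑σ) c (τ n) a)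
        ⊆ {t : ↥S | |(μhat n ω t - c) / (τ n * σ t)| ≤ a} := by
      apply closure_minimal
      · rintro t ⟨ht1, ht2⟩
        have ht1' : -a ≤ (μhat n ω t - c) / (τ n * σ t) := ht1
        have ht2' : ¬ (a ≤ (μhat n ω t - c) / (τ n * σ t)) := ht2
        exact abs_le.mpr ⟨ht1', le_of_lt (not_le.mp ht2')⟩
      · exact isClosed_le (continuous_abs.comp fcont) continuous_const
    have hmem := hsub (hω hs)
    have hval : (μhat n ω s - c) / (τ n * σ s) = g n ω s := by
      simp [hgdef, stdField, hμc hs]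
    have : |(μhat n ω s - c) / (τ n * σ s)| ≤ a := hmem
    rwa [hval] at this
  have hνIio : ∀ n, (ν n : Measure ℝ) (Set.Iio a) = P ((X n) ⁻¹' (Set.Iio a)) := by
    intro n; rw [hν_coe n, Measure.map_apply (hXmeas n) measurableSet_Iio]
  have hνIic : ∀ n, (ν n : Measure ℝ) (Set.Iic a) = P ((X n) ⁻¹' (Set.Iic a)) := by
    intro n; rw [hν_coe n, Measure.map_apply (hXmeas n) measurableSet_Iic]
  have hlowb : ∀ n, ((ν n : Measure ℝ) (Set.Iio a)).toReal ≤ (P {ω | B ⊆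
      closure (copeMinus (⇑(μhat n ω)) (⇑σ) c (τ n) a
        \ copePlus (⇑(μhat n ω)) (⇑σ) c (τ n) a)}).toReal := by
    intro n
    apply ENNReal.toReal_mono (measure_ne_top _ _)
    rw [hνIio n]
    exact measure_mono (hlow n)
  have hupb : ∀ n, (P {ω | B ⊆
      closure (copeMinus (⇑(μhat n ω)) (⇑σ) c (τ n) a
        \ copePlus (⇑(μhat n ω)) (⇑σ) c (τ n) a)}).toReal
      ≤ ((ν n : Measure ℝ) (Set.Iic a)).toReal := by
    intro n
    apply ENNReal.toReal_mono (measure_ne_top _ _)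
    rw [hνIic n]
    exact measure_mono (hup n)
  exact tendsto_of_tendsto_of_tendsto_of_le_of_le hIioT hIicT hlowb hupb

end
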